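/- Let A ∈ ℝ^{m×m} be symmetric positive definite, let y ∈ ℝ^m be nonzero, and let Ω ∈ ℝ^{m×n_Ω}. Let W_k ∈ ℝ^{m×r} have orthonormal columns spanning the Krylov subspace K_k(A, y) with W_kᵀ y = ‖y‖₂ e₁, and let Ŵ_k ∈ ℝ^{m×r̂} have orthonormal columns spanning the augmented Krylov subspace K_k(A, [y, Ω]) with Ŵ_kᵀ y = ‖y‖₂ e₁. Set T_k = W_kᵀ A W_k and T̂_k = Ŵ_kᵀ A Ŵ_k. Then 0 ≤ yᵀ A⁻¹ y − ‖y‖₂² (T̂_k⁻¹)₁₁ ≤ yᵀ A⁻¹ y − ‖y‖₂² (T_k⁻¹)₁₁, where (M⁻¹)₁₁ = e₁ᵀ M⁻¹ e₁. -/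

import Mathlib

open Matrix

/-- Euclidean norm of a vector in `ℝ^m`. -/
noncomputable def euclNorm {m : ℕ} (y : Fin m → ℝ) : ℝ :=
  Real.sqrt (y ⬝ᵥ y)

/-- The `A`-norm `‖v‖_A = √(vᵀ A v)`. -/
noncomputable def anorm {m : ℕ} (A : Matrix (Fin m) (Fin m) ℝ) (v : Fin m → ℝ) : ℝ :=
  Real.sqrt (v ⬝ᵥ A *ᵥ v)

/-- The range (column span) of a matrix `W ∈ ℝ^{m×r}`. -/
def colSpan {m r : ℕ} (W : Matrix (Fin m) (Fin r) ℝ) : Submodule ℝ (Fin m → ℝ) :=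
  Submodule.span ℝ (Set.range Wᵀ)

/-- The block Krylov subspace `K_k(A, Z)`, the span of the columns of
`Z, AZ, …, A^{k-1} Z`. -/
def krylov {m b : ℕ} (k : ℕ) (A : Matrix (Fin m) (Fin m) ℝ)
    (Z : Matrix (Fin m) (Fin b) ℝ) : Submodule ℝ (Fin m → ℝ) :=
  Submodule.span ℝ (⋃ j ∈ Finset.range k, Set.range (A ^ j * Z)ᵀ)

/-- The Krylov subspace `K_k(A, y)` for a vector `y`, the span of
`y, Ay, …, A^{k-1} y`. -/
def krylovVec {m : ℕ} (k : ℕ) (A : Matrix (Fin m) (Fin m) ℝ)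
    (y : Fin m → ℝ) : Submodule ℝ (Fin m → ℝ) :=
  Submodule.span ℝ {v | ∃ j < k, v = (A ^ j) *ᵥ y}

/-- Condition number: ratio of the largest to the smallest eigenvalue
(for a symmetric positive definite matrix, the spectrum is the set of its eigenvalues). -/
noncomputable def condNum {m : ℕ} (A : Matrix (Fin m) (Fin m) ℝ) : ℝ :=
  sSup (spectrum ℝ A) / sInf (spectrum ℝ A)

/-- `Trace(log M) = log (det M)` for a symmetric positive definite matrix `M`. -/
noncomputable def traceLog {n : ℕ} (M : Matrix (Fin n) (Fin n) ℝ) : ℝ :=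
  Real.log M.det

/-- The eigenvalues of a symmetric matrix, sorted in decreasing order:
`eigDesc M i` is the `i`-th largest eigenvalue of `M` (`i` is 0-based). -/
noncomputable def eigDesc {m : ℕ} (M : Matrix (Fin m) (Fin m) ℝ) : Fin m → ℝ :=
  open scoped Classical in
  if h : M.IsHermitian then fun i => (h.eigenvalues ∘ Tuple.sort h.eigenvalues) i.rev
  else 0


section Aux

open Matrix

variable {m r : ℕ}

private lemma dot_mulVec_eq (M : Matrix (Fin m) (Fin r) ℝ) (u : Fin m → ℝ) (v : Fin r → ℝ) :
    u ⬝ᵥ M *ᵥ v = (Mᵀ *ᵥ u) ⬝ᵥ v := by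
  rw [dotProduct_mulVec, mulVec_transpose]

private lemma mulVec_dot (M : Matrix (Fin m) (Fin r) ℝ) (u : Fin r → ℝ) (v : Fin m → ℝ) :
    (M *ᵥ u) ⬝ᵥ v = u ⬝ᵥ (Mᵀ *ᵥ v) := by
  rw [dotProduct_comm, dot_mulVec_eq, dotProduct_comm]

private lemma WAW_posDef {A : Matrix (Fin m) (Fin m) ℝ} (hA : A.PosDef)
    (W : Matrix (Fin m) (Fin r) ℝ) (hW : Wᵀ * W = 1) : (Wᵀ * A * W).PosDef := by
  have hAh : Aᵀ = A := hA.isHermitian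
  refine posDef_iff_dotProduct_mulVec.mpr ⟨?_, ?_⟩
  · show (Wᵀ * A * W)ᴴ = Wᵀ * A * W
    simp only [conjTranspose_eq_transpose_of_trivial, transpose_mul, transpose_transpose, hAh,
      Matrix.mul_assoc]
  · intro x hx
    have hWx : W *ᵥ x ≠ 0 := by
      intro h
      apply hx
      have : Wᵀ *ᵥ (W *ᵥ x) = Wᵀ *ᵥ (0 : Fin m → ℝ) := by rw [h]
      simpa [mulVec_mulVec, hW] using this
    have h0 := hA.dotProduct_mulVec_pos hWx
    have heq : x ⬝ᵥ (Wᵀ * A * W) *ᵥ x = (W *ᵥ x) ⬝ᵥ A *ᵥ (W *ᵥ x) := by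
      rw [show (Wᵀ * A * W) *ᵥ x = Wᵀ *ᵥ (A *ᵥ (W *ᵥ x)) by
        simp only [mulVec_mulVec, Matrix.mul_assoc], dot_mulVec_eq, transpose_transpose]
    simpa [heq] using h0

private lemma galerkin {A : Matrix (Fin m) (Fin m) ℝ} (hA : A.PosDef)
    (W : Matrix (Fin m) (Fin r) ℝ) (hW : Wᵀ * W = 1) (y : Fin m → ℝ) :
    Wᵀ *ᵥ (A *ᵥ (A⁻¹ *ᵥ y - W *ᵥ ((Wᵀ * A * W)⁻¹ *ᵥ (Wᵀ *ᵥ y)))) = 0 := by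
  have hAdet : IsUnit A.det := isUnit_iff_ne_zero.2 hA.det_pos.ne'
  have hAA : A * A⁻¹ = 1 := mul_nonsing_inv A hAdet
  have hT : (Wᵀ * A * W).PosDef := WAW_posDef hA W hW
  have hTT : (Wᵀ * A * W) * (Wᵀ * A * W)⁻¹ = 1 :=
    mul_nonsing_inv _ (isUnit_iff_ne_zero.2 hT.det_pos.ne')
  rw [mulVec_sub, mulVec_sub]
  have h1 : Wᵀ *ᵥ (A *ᵥ (A⁻¹ *ᵥ y)) = Wᵀ *ᵥ y := by
    simp only [mulVec_mulVec, Matrix.mul_assoc, hAA, Matrix.mul_one]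
  have h2 : Wᵀ *ᵥ (A *ᵥ (W *ᵥ ((Wᵀ * A * W)⁻¹ *ᵥ (Wᵀ *ᵥ y)))) = Wᵀ *ᵥ y := by
    simp only [mulVec_mulVec, ← Matrix.mul_assoc, hTT, Matrix.one_mul]
  rw [h1, h2, sub_self]

private lemma expand_sq {A : Matrix (Fin m) (Fin m) ℝ} (hA : A.PosDef)
    (W : Matrix (Fin m) (Fin r) ℝ) (y : Fin m → ℝ) (z : Fin r → ℝ) :
    (A⁻¹ *ᵥ y - W *ᵥ z) ⬝ᵥ A *ᵥ (A⁻¹ *ᵥ y - W *ᵥ z)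
      = y ⬝ᵥ (A⁻¹ *ᵥ y) - 2 * ((Wᵀ *ᵥ y) ⬝ᵥ z) + z ⬝ᵥ ((Wᵀ * A * W) *ᵥ z) := by
  have hAh : Aᵀ = A := hA.isHermitian
  have hAdet : IsUnit A.det := isUnit_iff_ne_zero.2 hA.det_pos.ne'
  have hAA : A * A⁻¹ = 1 := mul_nonsing_inv A hAdet
  have hAx : A *ᵥ (A⁻¹ *ᵥ y) = y := by rw [mulVec_mulVec, hAA, one_mulVec]
  have t1 : (A⁻¹ *ᵥ y) ⬝ᵥ A *ᵥ (A⁻¹ *ᵥ y) = y ⬝ᵥ (A⁻¹ *ᵥ y) := by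
    rw [dot_mulVec_eq, hAh, hAx]
  have t2 : (A⁻¹ *ᵥ y) ⬝ᵥ A *ᵥ (W *ᵥ z) = (Wᵀ *ᵥ y) ⬝ᵥ z := by
    rw [dot_mulVec_eq, hAh, hAx, dot_mulVec_eq]
  have t3 : (W *ᵥ z) ⬝ᵥ A *ᵥ (A⁻¹ *ᵥ y) = (Wᵀ *ᵥ y) ⬝ᵥ z := by
    rw [hAx, mulVec_dot, dotProduct_comm]
  have t4 : (W *ᵥ z) ⬝ᵥ A *ᵥ (W *ᵥ z) = z ⬝ᵥ ((Wᵀ * A * W) *ᵥ z) := by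
    rw [mulVec_dot]
    simp only [mulVec_mulVec, ← Matrix.mul_assoc]
  rw [mulVec_sub, sub_dotProduct, dotProduct_sub, dotProduct_sub, t1, t2, t3, t4]
  ring

private lemma key_eq {A : Matrix (Fin m) (Fin m) ℝ} (hA : A.PosDef)
    (W : Matrix (Fin m) (Fin r) ℝ) (hW : Wᵀ * W = 1) (y : Fin m → ℝ) :
    y ⬝ᵥ (A⁻¹ *ᵥ y) - (Wᵀ *ᵥ y) ⬝ᵥ ((Wᵀ * A * W)⁻¹ *ᵥ (Wᵀ *ᵥ y))
      = (A⁻¹ *ᵥ y - W *ᵥ ((Wᵀ * A * W)⁻¹ *ᵥ (Wᵀ *ᵥ y))) ⬝ᵥ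
          A *ᵥ (A⁻¹ *ᵥ y - W *ᵥ ((Wᵀ * A * W)⁻¹ *ᵥ (Wᵀ *ᵥ y))) := by
  have hT : (Wᵀ * A * W).PosDef := WAW_posDef hA W hW
  have hTT : (Wᵀ * A * W) * (Wᵀ * A * W)⁻¹ = 1 :=
    mul_nonsing_inv _ (isUnit_iff_ne_zero.2 hT.det_pos.ne')
  have hTz : (Wᵀ * A * W) *ᵥ ((Wᵀ * A * W)⁻¹ *ᵥ (Wᵀ *ᵥ y)) = Wᵀ *ᵥ y := by
    rw [mulVec_mulVec, hTT, one_mulVec]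
  rw [expand_sq hA W y, hTz, dotProduct_comm ((Wᵀ * A * W)⁻¹ *ᵥ (Wᵀ *ᵥ y)) (Wᵀ *ᵥ y)]
  ring

end Aux

private lemma norm_entry {n : ℕ} [NeZero n] (M : Matrix (Fin n) (Fin n) ℝ) (b : Fin n → ℝ)
    (c : ℝ) (hb : b = c • (Pi.single (0 : Fin n) (1 : ℝ) : Fin n → ℝ)) :
    b ⬝ᵥ (M *ᵥ b) = c ^ 2 * M 0 0 := by
  subst hb
  simp only [mulVec_smul, smul_dotProduct, dotProduct_smul, mulVec_single, smul_eq_mul,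
    single_dotProduct, op_smul_eq_mul, col_apply, mul_one, one_mul]
  ring

/-- augmentation does not harm the quadratic form approximation. -/
theorem stmt3 {m k nΩ r rh : ℕ} [NeZero r] [NeZero rh]
    (A : Matrix (Fin m) (Fin m) ℝ) (hA : A.PosDef)
    (y : Fin m → ℝ) (hy : y ≠ 0)
    (Ω : Matrix (Fin m) (Fin nΩ) ℝ)
    (W : Matrix (Fin m) (Fin r) ℝ) (hW : Wᵀ * W = 1)
    (hWspan : colSpan W = krylovVec k A y)
    (hWy : Wᵀ *ᵥ y = euclNorm y • (Pi.single (0 : Fin r) (1 : ℝ) : Fin r → ℝ))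
    (Wh : Matrix (Fin m) (Fin rh) ℝ) (hWh : Whᵀ * Wh = 1)
    (hWhspan : colSpan Wh = krylovVec k A y ⊔ krylov k A Ω)
    (hWhy : Whᵀ *ᵥ y = euclNorm y • (Pi.single (0 : Fin rh) (1 : ℝ) : Fin rh → ℝ)) :
    0 ≤ y ⬝ᵥ (A⁻¹ *ᵥ y) - euclNorm y ^ 2 * (Whᵀ * A * Wh)⁻¹ 0 0 ∧
      y ⬝ᵥ (A⁻¹ *ᵥ y) - euclNorm y ^ 2 * (Whᵀ * A * Wh)⁻¹ 0 0 ≤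
        y ⬝ᵥ (A⁻¹ *ᵥ y) - euclNorm y ^ 2 * (Wᵀ * A * W)⁻¹ 0 0 := by
  have hAh : Aᵀ = A := hA.isHermitian
  have h1 : euclNorm y ^ 2 * (Wᵀ * A * W)⁻¹ 0 0
      = (Wᵀ *ᵥ y) ⬝ᵥ ((Wᵀ * A * W)⁻¹ *ᵥ (Wᵀ *ᵥ y)) := (norm_entry _ _ _ hWy).symm
  have h2 : euclNorm y ^ 2 * (Whᵀ * A * Wh)⁻¹ 0 0
      = (Whᵀ *ᵥ y) ⬝ᵥ ((Whᵀ * A * Wh)⁻¹ *ᵥ (Whᵀ *ᵥ y)) := (norm_entry _ _ _ hWhy).symm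
  set e := A⁻¹ *ᵥ y - W *ᵥ ((Wᵀ * A * W)⁻¹ *ᵥ (Wᵀ *ᵥ y)) with he'
  set eh := A⁻¹ *ᵥ y - Wh *ᵥ ((Whᵀ * A * Wh)⁻¹ *ᵥ (Whᵀ *ᵥ y)) with heh'
  have k1 := key_eq hA W hW y
  have k2 := key_eq hA Wh hWh y
  have hg := galerkin hA Wh hWh y
  have hsub : colSpan W ≤ colSpan Wh := by rw [hWspan, hWhspan]; exact le_sup_left
  have hs : W *ᵥ ((Wᵀ * A * W)⁻¹ *ᵥ (Wᵀ *ᵥ y)) ∈ colSpan Wh :=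
    hsub (by rw [colSpan, show Set.range Wᵀ = Set.range W.col from rfl, ← Matrix.range_mulVecLin]; exact ⟨_, rfl⟩)
  have hsh : Wh *ᵥ ((Whᵀ * A * Wh)⁻¹ *ᵥ (Whᵀ *ᵥ y)) ∈ colSpan Wh := by
    rw [colSpan, show Set.range Whᵀ = Set.range Wh.col from rfl, ← Matrix.range_mulVecLin]; exact ⟨_, rfl⟩
  have hd : e - eh ∈ colSpan Wh := by
    rw [he', heh']
    have hrw : A⁻¹ *ᵥ y - W *ᵥ ((Wᵀ * A * W)⁻¹ *ᵥ (Wᵀ *ᵥ y))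
        - (A⁻¹ *ᵥ y - Wh *ᵥ ((Whᵀ * A * Wh)⁻¹ *ᵥ (Whᵀ *ᵥ y)))
        = Wh *ᵥ ((Whᵀ * A * Wh)⁻¹ *ᵥ (Whᵀ *ᵥ y))
          - W *ᵥ ((Wᵀ * A * W)⁻¹ *ᵥ (Wᵀ *ᵥ y)) := by abel
    rw [hrw]
    exact Submodule.sub_mem _ hsh hs
  rw [colSpan, show Set.range Whᵀ = Set.range Wh.col from rfl, ← Matrix.range_mulVecLin] at hd
  obtain ⟨u, hu⟩ := hd
  have hu' : Wh *ᵥ u = e - eh := hu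
  have cross : (e - eh) ⬝ᵥ A *ᵥ eh = 0 := by
    rw [← hu', mulVec_dot, hg, dotProduct_zero]
  have cross2 : eh ⬝ᵥ A *ᵥ (e - eh) = 0 := by
    rw [dot_mulVec_eq, hAh, dotProduct_comm]
    exact cross
  have posd : 0 ≤ (e - eh) ⬝ᵥ A *ᵥ (e - eh) := by simpa using hA.posSemidef.dotProduct_mulVec_nonneg (e - eh)
  have posdh : 0 ≤ eh ⬝ᵥ A *ᵥ eh := by simpa using hA.posSemidef.dotProduct_mulVec_nonneg eh
  have decomp : e ⬝ᵥ A *ᵥ e = eh ⬝ᵥ A *ᵥ eh + (e - eh) ⬝ᵥ A *ᵥ (e - eh) := by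
    rw [show e = eh + (e - eh) from by abel]
    rw [mulVec_add, dotProduct_add, add_dotProduct, add_dotProduct, cross, cross2]
    ring
  constructor
  · rw [h2, k2]
    exact posdh
  · rw [h1, h2, k1, k2]
    linarith [decomp, posd]
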